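/- Let a > 0, 0 < ν < 1, α₀ > 0, p* ≥ 0, Ste > 0, and define for ξ ≥ α₀ the function φ_c(ξ) = (a·α₀^ν·Ste/2)·exp(−(ξ² − α₀²)/a) / [1 + (α₀^ν·p*/2)·exp(α₀²/a)·a^{(1−ν)/2}·(γ((1−ν)/2, ξ²/a) − γ((1−ν)/2, α₀²/a))], where γ(s,x) = ∫₀ˣ t^{s−1} e^{−t} dt is the lower incomplete gamma function. Then φ_c is strictly decreasing on [α₀, ∞) and φ_c(ξ) → 0 as ξ → +∞; moreover, if a·Ste > 2·α₀ then the equation φ_c(ξ) = ξ^{ν+1} has exactly one solution ξ ∈ (α₀, ∞). -/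

import Mathlib

open Real Set Filter

noncomputable def lowerGamma (s x : ℝ) : ℝ :=
  ∫ t in (0 : ℝ)..x, t ^ (s - 1) * Real.exp (-t)

noncomputable def phic (a ν α₀ p Ste ξ : ℝ) : ℝ :=
  (a * α₀ ^ ν * Ste / 2) * Real.exp (-(ξ ^ 2 - α₀ ^ 2) / a) /
    (1 + (α₀ ^ ν * p / 2) * Real.exp (α₀ ^ 2 / a) * a ^ ((1 - ν) / 2) *
      (lowerGamma ((1 - ν) / 2) (ξ ^ 2 / a) -
        lowerGamma ((1 - ν) / 2) (α₀ ^ 2 / a)))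

theorem stmt_16 (a ν α₀ p Ste : ℝ)
    (ha : 0 < a) (hν0 : 0 < ν) (hν1 : ν < 1) (hα₀ : 0 < α₀)
    (hp : 0 ≤ p) (hSte : 0 < Ste) :
    StrictAntiOn (phic a ν α₀ p Ste) (Ici α₀) ∧
    Tendsto (phic a ν α₀ p Ste) atTop (nhds 0) ∧
    (2 * α₀ < a * Ste →
      ∃! ξ : ℝ, ξ ∈ Ioi α₀ ∧ phic a ν α₀ p Ste ξ = ξ ^ (ν + 1)) := by
  set s : ℝ := (1 - ν) / 2 with hs_def
  have hs : 0 < s := by simp only [hs_def]; linarith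
  -- interval integrability of the integrand
  have hint : ∀ u v : ℝ,
      IntervalIntegrable (fun t => t ^ (s - 1) * Real.exp (-t)) MeasureTheory.volume u v := by
    intro u v
    have h1 : IntervalIntegrable (fun t : ℝ => t ^ (s - 1)) MeasureTheory.volume u v :=
      intervalIntegral.intervalIntegrable_rpow' (by linarith)
    exact h1.mul_continuousOn (Continuous.continuousOn (by continuity))
  have hG_cont : Continuous (lowerGamma s) :=
    intervalIntegral.continuous_primitive hint 0
  have hG_mono : ∀ x y : ℝ, 0 ≤ x → x ≤ y → lowerGamma s x ≤ lowerGamma s y := by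
    intro x y hx hxy
    have hadd := intervalIntegral.integral_add_adjacent_intervals (hint 0 x) (hint x y)
    have hpos : 0 ≤ ∫ t in x..y, t ^ (s - 1) * Real.exp (-t) := by
      apply intervalIntegral.integral_nonneg hxy
      intro t ht
      have ht0 : 0 ≤ t := le_trans hx ht.1
      positivity
    simp only [lowerGamma]
    linarith
  set K : ℝ := α₀ ^ ν * p / 2 * Real.exp (α₀ ^ 2 / a) * a ^ ((1 - ν) / 2) with hK_def
  have hK : 0 ≤ K := by positivity
  set N : ℝ → ℝ := fun ξ => (a * α₀ ^ ν * Ste / 2) * Real.exp (-(ξ ^ 2 - α₀ ^ 2) / a)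
    with hN_def
  set D : ℝ → ℝ := fun ξ =>
      1 + K * (lowerGamma s (ξ ^ 2 / a) - lowerGamma s (α₀ ^ 2 / a)) with hD_def
  have hphic : ∀ ξ, phic a ν α₀ p Ste ξ = N ξ / D ξ := by
    intro ξ; rfl
  have hNpos : ∀ ξ, 0 < N ξ := by
    intro ξ; simp only [hN_def]; positivity
  have hsq : ∀ x y : ℝ, α₀ ≤ x → x ≤ y → x ^ 2 ≤ y ^ 2 := by
    intro x y hx hxy; nlinarith
  have hD1 : ∀ ξ, α₀ ≤ ξ → 1 ≤ D ξ := by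
    intro ξ hξ
    have h1 : lowerGamma s (α₀ ^ 2 / a) ≤ lowerGamma s (ξ ^ 2 / a) := by
      apply hG_mono _ _ (by positivity)
      exact div_le_div_of_nonneg_right (hsq α₀ ξ le_rfl hξ) ha.le
    have h2 : 0 ≤ K * (lowerGamma s (ξ ^ 2 / a) - lowerGamma s (α₀ ^ 2 / a)) :=
      mul_nonneg hK (by linarith)
    simp only [hD_def]
    linarith
  have hDmono : ∀ x y, α₀ ≤ x → x ≤ y → D x ≤ D y := by
    intro x y hx hxy
    have h1 : lowerGamma s (x ^ 2 / a) ≤ lowerGamma s (y ^ 2 / a) := by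
      apply hG_mono _ _ (by positivity)
      exact div_le_div_of_nonneg_right (hsq x y hx hxy) ha.le
    simp only [hD_def]
    nlinarith
  have hNanti : ∀ x y, α₀ ≤ x → x < y → N y < N x := by
    intro x y hx hxy
    have h2 : x ^ 2 < y ^ 2 := by nlinarith
    have : -(y ^ 2 - α₀ ^ 2) / a < -(x ^ 2 - α₀ ^ 2) / a := by
      apply div_lt_div_of_pos_right ?_ ha
      linarith
    simp only [hN_def]
    have := Real.exp_lt_exp.2 this
    nlinarith [this, mul_pos (mul_pos ha (Real.rpow_pos_of_pos hα₀ ν)) hSte]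
  -- strict anti
  have hanti : StrictAntiOn (phic a ν α₀ p Ste) (Ici α₀) := by
    intro x hx y hy hxy
    rw [hphic, hphic]
    have hDx : (1:ℝ) ≤ D x := hD1 x hx
    have hDy : (1:ℝ) ≤ D y := hD1 y hy
    calc N y / D y ≤ N y / D x := by
          apply div_le_div_of_nonneg_left (hNpos y).le (by linarith)
          exact hDmono x y hx hxy.le
      _ < N x / D x := by
          apply div_lt_div_of_pos_right (hNanti x y hx hxy) (by linarith)
  -- tendsto
  have hNlim : Tendsto N atTop (nhds 0) := by
    have h1 : Tendsto (fun ξ : ℝ => -(ξ ^ 2 - α₀ ^ 2) / a) atTop atBot := by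
      apply Tendsto.atBot_div_const ha
      apply tendsto_neg_atBot_iff.2
      apply tendsto_atTop_add_const_right
      exact tendsto_pow_atTop (two_ne_zero)
    have h2 := (Real.tendsto_exp_atBot.comp h1).const_mul (a * α₀ ^ ν * Ste / 2)
    simpa [Function.comp, hN_def] using h2
  have htend : Tendsto (phic a ν α₀ p Ste) atTop (nhds 0) := by
    apply tendsto_of_tendsto_of_tendsto_of_le_of_le' tendsto_const_nhds hNlim
    · filter_upwards [eventually_ge_atTop α₀] with ξ hξ
      rw [hphic]
      have := hD1 ξ hξ
      positivity
    · filter_upwards [eventually_ge_atTop α₀] with ξ hξ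
      rw [hphic]
      exact div_le_self (hNpos ξ).le (hD1 ξ hξ)
  refine ⟨hanti, htend, ?_⟩
  intro hlt
  -- F
  set F : ℝ → ℝ := fun ξ => phic a ν α₀ p Ste ξ - ξ ^ (ν + 1) with hF_def
  have hFanti : StrictAntiOn F (Ici α₀) := by
    intro x hx y hy hxy
    have h1 := hanti hx hy hxy
    have h2 : x ^ (ν + 1) < y ^ (ν + 1) :=
      Real.rpow_lt_rpow (le_trans hα₀.le hx) hxy (by linarith)
    simp only [hF_def]
    linarith
  have hFcont : ContinuousOn F (Ici α₀) := by
    have hNc : Continuous N := by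
      simp only [hN_def]
      exact continuous_const.mul (Real.continuous_exp.comp
        ((((continuous_pow 2).sub continuous_const).neg).div_const a))
    have hDc : Continuous D := by
      simp only [hD_def]
      apply continuous_const.add
      apply continuous_const.mul
      apply Continuous.sub _ continuous_const
      exact hG_cont.comp ((continuous_pow 2).div_const a)
    have hphicont : ContinuousOn (phic a ν α₀ p Ste) (Ici α₀) := by
      have : ContinuousOn (fun ξ => N ξ / D ξ) (Ici α₀) := by
        apply ContinuousOn.div hNc.continuousOn hDc.continuousOn
        intro x hx; have := hD1 x hx; linarith
      exact this.congr (fun x _ => hphic x)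
    apply hphicont.sub
    intro x hx
    exact (Real.continuousAt_rpow_const x (ν + 1)
      (Or.inl (ne_of_gt (lt_of_lt_of_le hα₀ hx)))).continuousWithinAt
  have hphiα₀ : phic a ν α₀ p Ste α₀ = a * α₀ ^ ν * Ste / 2 := by
    simp [phic, sub_self]
  have hFα₀ : 0 < F α₀ := by
    simp only [hF_def, hphiα₀]
    have hr : α₀ ^ (ν + 1) = α₀ ^ ν * α₀ := by
      rw [Real.rpow_add hα₀, Real.rpow_one]
    rw [hr]
    have h := Real.rpow_pos_of_pos hα₀ ν
    nlinarith
  -- find M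
  have hev : ∀ᶠ ξ in atTop, phic a ν α₀ p Ste ξ < α₀ ^ (ν + 1) :=
    htend.eventually (gt_mem_nhds (Real.rpow_pos_of_pos hα₀ (ν + 1)))
  obtain ⟨M, hM1, hM2⟩ := ((eventually_gt_atTop α₀).and hev).exists
  have hFM : F M < 0 := by
    have : α₀ ^ (ν + 1) ≤ M ^ (ν + 1) :=
      Real.rpow_le_rpow hα₀.le hM1.le (by linarith)
    simp only [hF_def]
    linarith
  have hIcc : ContinuousOn F (Icc α₀ M) :=
    hFcont.mono (Icc_subset_Ici_self)
  have h0 : (0:ℝ) ∈ Ioo (F M) (F α₀) := ⟨hFM, hFα₀⟩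
  obtain ⟨ξ, hξmem, hξeq⟩ := intermediate_value_Ioo' hM1.le hIcc h0
  refine ⟨ξ, ⟨hξmem.1, by simp only [hF_def] at hξeq; linarith⟩, ?_⟩
  intro y hy
  have hyI : y ∈ Ici α₀ := mem_Ici.2 (le_of_lt (mem_Ioi.1 hy.1))
  have hξI : ξ ∈ Ici α₀ := le_of_lt hξmem.1
  apply hFanti.injOn hyI hξI
  have : F y = 0 := by simp only [hF_def]; linarith [hy.2]
  rw [this, hξeq]
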